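/- Let X, Y be finite alphabets and n >= 1. The directed information functional I(Q; P) = sum_{x^n,y^n} Q(x^n||y^{n-1}) P(y^n||x^n) log( P(y^n||x^n) / sum_{x'^n} Q(x'^n||y^{n-1}) P(y^n||x'^n) ) is uniformly continuous in Q: if the L1 distance between Q1 and Q2 is at most Delta <= 1/2, then |I(Q1;P) - I(Q2;P)| <= -Delta log(Delta / |Y^n|^2) for every channel causal conditioning P. -/

import Mathlib

/-- `Q` is a causal conditioning input distribution `Q(x^n ‖ y^{n-1})`:
nonnegative, normalized for every `y^n`, and the marginal of any length-`i`
prefix of `x^n` depends on `y^n` only through its first `i-1` coordinates. -/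
def IsCausalIn {X Y : Type} [Fintype X] [DecidableEq X] [Fintype Y] (n : ℕ)
    (Q : (Fin n → X) → (Fin n → Y) → ℝ) : Prop :=
  (∀ x y, 0 ≤ Q x y) ∧ (∀ y, ∑ x, Q x y = 1) ∧
  ∀ (i : ℕ), i ≤ n → ∀ (x : Fin n → X) (y y' : Fin n → Y),
    (∀ j : Fin n, (j : ℕ) + 1 < i → y j = y' j) →
    (∑ x' ∈ Finset.univ.filter
        (fun x' : Fin n → X => ∀ j : Fin n, (j : ℕ) < i → x' j = x j), Q x' y) =
      ∑ x' ∈ Finset.univ.filter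
        (fun x' : Fin n → X => ∀ j : Fin n, (j : ℕ) < i → x' j = x j), Q x' y'

/-- `P` is a channel causal conditioning distribution `P(y^n ‖ x^n)`:
nonnegative, normalized for every `x^n`, and the marginal of any length-`i`
prefix of `y^n` depends on `x^n` only through its first `i` coordinates. -/
def IsCausalCh {X Y : Type} [Fintype X] [Fintype Y] [DecidableEq Y] (n : ℕ)
    (P : (Fin n → Y) → (Fin n → X) → ℝ) : Prop :=
  (∀ y x, 0 ≤ P y x) ∧ (∀ x, ∑ y, P y x = 1) ∧
  ∀ (i : ℕ), i ≤ n → ∀ (y : Fin n → Y) (x x' : Fin n → X),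
    (∀ j : Fin n, (j : ℕ) < i → x j = x' j) →
    (∑ y' ∈ Finset.univ.filter
        (fun y' : Fin n → Y => ∀ j : Fin n, (j : ℕ) < i → y' j = y j), P y' x) =
      ∑ y' ∈ Finset.univ.filter
        (fun y' : Fin n → Y => ∀ j : Fin n, (j : ℕ) < i → y' j = y j), P y' x'

/-- Directed information functional
`I(Q;P) = ∑_{x^n,y^n} Q(x^n‖y^{n-1}) P(y^n‖x^n) log (P(y^n‖x^n) / ∑_{x'} Q(x'‖y^{n-1}) P(y^n‖x'))`. -/
noncomputable def DI {X Y : Type} [Fintype X] [Fintype Y] (n : ℕ)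
    (Q : (Fin n → X) → (Fin n → Y) → ℝ)
    (P : (Fin n → Y) → (Fin n → X) → ℝ) : ℝ :=
  ∑ x, ∑ y, Q x y * P y x * Real.log (P y x / ∑ x', Q x' y * P y x')


section AuxDI
open Real Finset

private lemma log_le_div_e {v : ℝ} (hv : 0 < v) : Real.log v ≤ v / Real.exp 1 := by
  have h := Real.log_le_sub_one_of_pos (x := v / Real.exp 1) (by positivity)
  have h2 : Real.log (v / Real.exp 1) = Real.log v - 1 := by
    rw [Real.log_div (ne_of_gt hv) (ne_of_gt (Real.exp_pos 1)), Real.log_exp]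
  linarith [h2 ▸ h]

private lemma neg_entropy_diff_le₁ {s u : ℝ} (hs : 0 ≤ s) (hu : 0 ≤ u) :
    -((s+u) * Real.log (s+u)) - (-(s * Real.log s)) ≤ -(u * Real.log u) := by
  rcases eq_or_lt_of_le hs with h | hs
  · simp [← h]
  rcases eq_or_lt_of_le hu with h | hu
  · simp [← h]
  have h1 : s * Real.log s ≤ s * Real.log (s + u) :=
    mul_le_mul_of_nonneg_left (Real.log_le_log hs (by linarith)) (le_of_lt hs)
  have h2 : u * Real.log u ≤ u * Real.log (s + u) :=
    mul_le_mul_of_nonneg_left (Real.log_le_log hu (by linarith)) (le_of_lt hu)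
  nlinarith

private lemma neg_entropy_pair {s u : ℝ} (hs : 0 ≤ s) (hu : 0 ≤ u) (hsu : s + u ≤ 1) :
    -(s * Real.log s) ≤ -((s+u) * Real.log (s+u)) + -((1-u) * Real.log (1-u)) := by
  have hconc := Real.strictConcaveOn_negMulLog.concaveOn
  rcases eq_or_lt_of_le hu with h | hu
  · simp [← h]
  have hs1 : s < 1 := by linarith
  set lam : ℝ := (1 - s - u) / (1 - s) with hlam
  set mu : ℝ := u / (1 - s) with hmu
  have hd : (0:ℝ) < 1 - s := by linarith
  have hlam0 : 0 ≤ lam := by apply div_nonneg <;> linarith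
  have hmu0 : 0 ≤ mu := by apply div_nonneg <;> linarith
  have hsum : lam + mu = 1 := by rw [hlam, hmu]; field_simp; ring
  have hmem1 : s ∈ Set.Ici (0:ℝ) := hs
  have hmem2 : (1:ℝ) ∈ Set.Ici (0:ℝ) := by norm_num
  have e1 : lam • s + mu • (1:ℝ) = s + u := by
    simp only [smul_eq_mul, hlam, hmu]
    field_simp
    ring
  have e2 : mu • s + lam • (1:ℝ) = 1 - u := by
    simp only [smul_eq_mul, hlam, hmu]
    field_simp
    ring
  have c1 := hconc.2 hmem1 hmem2 hlam0 hmu0 hsum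
  have c2 := hconc.2 hmem1 hmem2 hmu0 hlam0 (by linarith [hsum])
  rw [e1] at c1
  rw [e2] at c2
  simp only [Real.negMulLog, Real.log_one, smul_eq_mul] at c1 c2
  have key : (lam + mu) * (-(s * Real.log s)) ≤
      -((s+u) * Real.log (s+u)) + -((1-u) * Real.log (1-u)) := by nlinarith [c1, c2]
  rw [hsum, one_mul] at key
  exact key

-- φ(1-u) ≤ φ(u) for 0 ≤ u ≤ 1/2
private lemma neg_entropy_mirror {u : ℝ} (hu : 0 ≤ u) (hu2 : u ≤ 1/2) :
    -((1-u) * Real.log (1-u)) ≤ -(u * Real.log u) := by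
  rcases eq_or_lt_of_le hu with h | hu
  · simp [← h]
  set t : ℝ := 1 - 2*u with ht
  have ht0 : 0 ≤ t := by rw [ht]; linarith
  have ht1 : t ≤ 1 := by rw [ht]; linarith
  -- step 1 : exp (t * log 2) ≤ 1 + t  (convexity of exp)
  have hc := convexOn_exp.2 (Set.mem_univ (0:ℝ)) (Set.mem_univ (Real.log 2))
      (by linarith : (0:ℝ) ≤ 1 - t) ht0 (by ring)
  have hexp2 : Real.exp (Real.log 2) = 2 := Real.exp_log (by norm_num)
  simp only [smul_eq_mul, mul_zero, zero_add, Real.exp_zero, hexp2] at hc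
  have hstep1 : Real.exp (t * Real.log 2) ≤ 1 + t := by
    calc Real.exp (t * Real.log 2) ≤ (1-t) * 1 + t * 2 := hc
    _ = 1 + t := by ring
  -- step 2 : t * log 2 ≤ log (1 + t)
  have hstep2 : t * Real.log 2 ≤ Real.log (1 + t) :=
    (Real.le_log_iff_exp_le (by linarith)).2 hstep1
  -- step 3 : -log (1-u) ≤ 2 * u * log 2
  have h1u : (1:ℝ) - u = (1 + t) / 2 := by rw [ht]; ring
  have hstep3 : -Real.log (1-u) ≤ 2 * u * Real.log 2 := by
    rw [h1u, Real.log_div (by linarith) (by norm_num)]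
    have heq : 2 * u * Real.log 2 = Real.log 2 - t * Real.log 2 := by rw [ht]; ring
    linarith [hstep2, heq]
  -- step 4 : 2 * log 2 * (1 - u) ≤ -log u
  have hlog2le : Real.log 2 ≤ 1 := by
    have := Real.log_le_sub_one_of_pos (x := 2) (by norm_num); linarith
  have hlog2pos : 0 < Real.log 2 := Real.log_pos (by norm_num)
  have hstep4 : 2 * Real.log 2 * (1 - u) ≤ -Real.log u := by
    have h2u : Real.log u = Real.log (2*u) - Real.log 2 := by
      rw [Real.log_mul (by norm_num) (ne_of_gt hu)]; ring
    have hloga : Real.log (2*u) ≤ 2*u - 1 := Real.log_le_sub_one_of_pos (by linarith)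
    nlinarith
  -- combine
  have hA : -((1-u) * Real.log (1-u)) = (1-u) * (-Real.log (1-u)) := by ring
  have hB : -(u * Real.log u) = u * (-Real.log u) := by ring
  rw [hA, hB]
  calc (1-u) * (-Real.log (1-u)) ≤ (1-u) * (2 * u * Real.log 2) := by
        apply mul_le_mul_of_nonneg_left hstep3 (by linarith)
    _ = u * (2 * Real.log 2 * (1-u)) := by ring
    _ ≤ u * (-Real.log u) := mul_le_mul_of_nonneg_left hstep4 (le_of_lt hu)

private lemma ent_pointwise {a b : ℝ} (ha : 0 ≤ a) (hb : 0 ≤ b) (ha1 : a ≤ 1) (hb1 : b ≤ 1)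
    (hd : |a - b| ≤ 1/2) :
    |a * Real.log a - b * Real.log b| ≤ -(|a - b| * Real.log (|a - b|)) := by
  have key : ∀ s t : ℝ, 0 ≤ s → s ≤ t → t ≤ 1 → t - s ≤ 1/2 →
      |t * Real.log t - s * Real.log s| ≤ -((t-s) * Real.log (t-s)) := by
    intro s t hs hst ht1 hu2
    set u := t - s with hu
    have hu0 : 0 ≤ u := by linarith
    have htsu : t = s + u := by rw [hu]; ring
    rw [abs_le]
    constructor
    · have := neg_entropy_diff_le₁ hs hu0
      rw [← htsu] at this
      linarith
    · have h1 := neg_entropy_pair hs hu0 (by linarith)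
      have h2 := neg_entropy_mirror hu0 hu2
      rw [← htsu] at h1
      linarith
  rcases le_total b a with h | h
  · have hd1 : a - b ≤ 1/2 := (abs_le.1 hd).2
    have := key b a hb h ha1 hd1
    rwa [abs_of_nonneg (by linarith : (0:ℝ) ≤ a - b)]
  · have hd1 : b - a ≤ 1/2 := by
      rw [abs_sub_comm] at hd; exact (abs_le.1 hd).2
    have := key a b ha h hb1 hd1
    rw [abs_sub_comm (a * Real.log a), abs_sub_comm a b,
        abs_of_nonneg (by linarith : (0:ℝ) ≤ b - a)]
    exact this

private lemma mono_xlogkx {a b k : ℝ} (ha : 0 ≤ a) (hab : a ≤ b) (hb : b ≤ 1/2) (hk : 2 ≤ k) :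
    a * Real.log (k/a) ≤ b * Real.log (k/b) := by
  rcases eq_or_lt_of_le (ha.trans hab) with h | hbpos
  · have : a = 0 := le_antisymm (h ▸ hab) ha
    simp [this, ← h]
  have hkb1 : 1 ≤ Real.log (k/b) := by
    rw [Real.le_log_iff_exp_le (by positivity)]
    have he : Real.exp 1 < 2.7182818286 := Real.exp_one_lt_d9
    have h2 : (2.7182818286:ℝ) ≤ k / b := by
      rw [le_div_iff₀ hbpos]; linarith
    linarith
  rcases eq_or_lt_of_le ha with h | hapos
  · rw [← h]; simp; positivity
  have hsplit : Real.log (k/a) = Real.log (k/b) + Real.log (b/a) := by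
    rw [← Real.log_mul (by positivity) (by positivity)]
    congr 1
    field_simp
  have hba : a * Real.log (b/a) ≤ b - a := by
    have hl := Real.log_le_sub_one_of_pos (x := b/a) (by positivity)
    have h2 : a * Real.log (b/a) ≤ a * (b/a - 1) := mul_le_mul_of_nonneg_left hl (le_of_lt hapos)
    have h3 : a * (b/a - 1) = b - a := by field_simp
    linarith
  have h4 : b - a ≤ (b - a) * Real.log (k/b) := by nlinarith
  calc a * Real.log (k/a) = a * Real.log (k/b) + a * Real.log (b/a) := by rw [hsplit]; ring
    _ ≤ a * Real.log (k/b) + (b - a) * Real.log (k/b) := by linarith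
    _ = b * Real.log (k/b) := by ring

private lemma final_combination {σ Δ k : ℝ} (hσ : 0 < σ) (hσΔ : σ ≤ Δ) (hΔ : Δ ≤ 1/2)
    (hk : 2 ≤ k) :
    σ * Real.log (Δ/σ) + σ * Real.log (k/σ) ≤ Δ * Real.log (k^2/Δ) := by
  have hΔpos : 0 < Δ := lt_of_lt_of_le hσ hσΔ
  have hkpos : (0:ℝ) < k := by linarith
  have hRHSsplit : Real.log (k^2/Δ) = Real.log k + Real.log (k/Δ) := by
    rw [← Real.log_mul (by positivity) (by positivity)]
    congr 1; field_simp
  have hlogk : 0 ≤ Real.log k := Real.log_nonneg (by linarith)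
  by_cases hcase : Real.exp 2 * Δ ≤ k
  · have hlog2 : 2 ≤ Real.log (k/Δ) := by
      rw [Real.le_log_iff_exp_le (by positivity), le_div_iff₀ hΔpos]
      linarith
    have hsplit : Real.log (Δ/σ) + Real.log (k/σ) =
        Real.log (k/Δ) + 2 * Real.log (Δ/σ) := by
      have e : k/σ = (k/Δ) * (Δ/σ) := by field_simp
      rw [e, Real.log_mul (by positivity) (by positivity)]; ring
    have hds : σ * Real.log (Δ/σ) ≤ Δ - σ := by
      have hl := Real.log_le_sub_one_of_pos (x := Δ/σ) (by positivity)
      have h2 : σ * Real.log (Δ/σ) ≤ σ * (Δ/σ - 1) := mul_le_mul_of_nonneg_left hl (le_of_lt hσ)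
      have h3 : σ * (Δ/σ - 1) = Δ - σ := by field_simp
      linarith
    have main : σ * Real.log (Δ/σ) + σ * Real.log (k/σ) ≤ Δ * Real.log (k/Δ) := by
      have e1 : σ * Real.log (Δ/σ) + σ * Real.log (k/σ)
          = σ * Real.log (k/Δ) + 2 * (σ * Real.log (Δ/σ)) := by
        calc σ * Real.log (Δ/σ) + σ * Real.log (k/σ)
            = σ * (Real.log (Δ/σ) + Real.log (k/σ)) := by ring
          _ = σ * (Real.log (k/Δ) + 2 * Real.log (Δ/σ)) := by rw [hsplit]
          _ = σ * Real.log (k/Δ) + 2 * (σ * Real.log (Δ/σ)) := by ring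
      rw [e1]
      nlinarith [hds, hlog2, sub_nonneg.2 hσΔ]
    rw [hRHSsplit]
    nlinarith [main, mul_nonneg (le_of_lt hΔpos) hlogk]
  · push_neg at hcase
    set v := Real.sqrt (Δ * k) with hv
    have hvpos : 0 < v := Real.sqrt_pos.2 (by positivity)
    have hsq : v^2 = Δ * k := Real.sq_sqrt (by positivity)
    have hsplit : Real.log (Δ/σ) + Real.log (k/σ) = 2 * Real.log (v/σ) := by
      have e0 : Real.log (Δ/σ) + Real.log (k/σ) = Real.log ((Δ/σ) * (k/σ)) := by
        rw [Real.log_mul (by positivity) (by positivity)]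
      rw [e0]
      have e : (Δ/σ) * (k/σ) = (v/σ)^2 := by
        rw [div_pow, hsq]; ring
      rw [e, Real.log_pow]; push_cast; ring
    have hlogv : Real.log (v/σ) ≤ (v/σ) / Real.exp 1 := log_le_div_e (by positivity)
    have hexpsq : (Real.exp 1)^2 = Real.exp 2 := by
      rw [← Real.exp_nat_mul]; norm_num
    have hvlt : v < Real.exp 1 * Δ := by
      have h1 : Δ * k < (Real.exp 1 * Δ)^2 := by
        have h := mul_lt_mul_of_pos_left hcase hΔpos
        nlinarith [hexpsq, h]
      have h2 := Real.sqrt_lt_sqrt (by positivity) h1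
      rwa [Real.sqrt_sq (by positivity)] at h2
    have hLHS : σ * (Real.log (Δ/σ) + Real.log (k/σ)) ≤ 2 * Δ := by
      rw [hsplit]
      have h1 : σ * (2 * Real.log (v/σ)) ≤ σ * (2 * ((v/σ)/Real.exp 1)) := by
        apply mul_le_mul_of_nonneg_left _ (le_of_lt hσ)
        linarith
      have h2 : σ * (2 * ((v/σ)/Real.exp 1)) = 2 * v / Real.exp 1 := by
        field_simp
      have h3 : 2 * v / Real.exp 1 ≤ 2 * Δ := by
        rw [div_le_iff₀ (Real.exp_pos 1)]
        nlinarith [hvlt]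
      linarith
    have hRHS : 2 * Δ ≤ Δ * Real.log (k^2/Δ) := by
      have h8 : (8:ℝ) ≤ k^2/Δ := by
        rw [le_div_iff₀ hΔpos]
        nlinarith [sq_nonneg (k-2)]
      have hexp2 : Real.exp 2 ≤ 8 := by
        have he : Real.exp 1 < 2.7182818286 := Real.exp_one_lt_d9
        nlinarith [Real.exp_pos 1, hexpsq]
      have hlog8 : 2 ≤ Real.log (k^2/Δ) := by
        rw [Real.le_log_iff_exp_le (by positivity)]
        linarith
      have := mul_le_mul_of_nonneg_left hlog8 (le_of_lt hΔpos)
      linarith [this]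
    calc σ * Real.log (Δ/σ) + σ * Real.log (k/σ)
        = σ * (Real.log (Δ/σ) + Real.log (k/σ)) := by ring
      _ ≤ 2 * Δ := hLHS
      _ ≤ Δ * Real.log (k^2/Δ) := hRHS

private lemma DI_decomp {X Y : Type} [Fintype X] [Fintype Y] (n : ℕ)
    (Q : (Fin n → X) → (Fin n → Y) → ℝ) (P : (Fin n → Y) → (Fin n → X) → ℝ)
    (hQ0 : ∀ x y, 0 ≤ Q x y) (hP0 : ∀ y x, 0 ≤ P y x) :
    DI n Q P = (∑ x, ∑ y, Q x y * P y x * Real.log (P y x))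
      - ∑ y, (∑ x, Q x y * P y x) * Real.log (∑ x, Q x y * P y x) := by
  unfold DI
  have step : ∀ x y, Q x y * P y x * Real.log (P y x / ∑ x', Q x' y * P y x')
      = Q x y * P y x * Real.log (P y x)
        - Q x y * P y x * Real.log (∑ x', Q x' y * P y x') := by
    intro x y
    rcases eq_or_ne (Q x y * P y x) 0 with h0 | h0
    · rw [h0]; ring
    · have hPne : P y x ≠ 0 := fun h => h0 (by rw [h]; ring)
      have hPpos : 0 < P y x := lt_of_le_of_ne (hP0 y x) (Ne.symm hPne)
      have hQPpos : 0 < Q x y * P y x :=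
        lt_of_le_of_ne (mul_nonneg (hQ0 x y) (hP0 y x)) (Ne.symm h0)
      have hrpos : 0 < ∑ x', Q x' y * P y x' :=
        lt_of_lt_of_le hQPpos
          (Finset.single_le_sum (fun i _ => mul_nonneg (hQ0 i y) (hP0 y i)) (Finset.mem_univ x))
      rw [Real.log_div (ne_of_gt hPpos) (ne_of_gt hrpos)]
      ring
  simp only [step, Finset.sum_sub_distrib]
  congr 1
  rw [Finset.sum_comm]
  exact Finset.sum_congr rfl fun y _ => by rw [← Finset.sum_mul]

private lemma term_bound1 {dd p c : ℝ} (hdd : 0 ≤ dd) (hp0 : 0 ≤ p) (hc : 0 < c) :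
    dd * p * (-Real.log p) ≤ dd / c - dd * p + dd * p * Real.log c := by
  rcases eq_or_lt_of_le hp0 with h | hp
  · rw [← h]; simp; positivity
  have h1 : Real.log (1 / (p * c)) ≤ 1/(p*c) - 1 := Real.log_le_sub_one_of_pos (by positivity)
  have h2 : Real.log (1/(p*c)) = -Real.log p - Real.log c := by
    rw [one_div, Real.log_inv, Real.log_mul (ne_of_gt hp) (ne_of_gt hc)]; ring
  have h3 : -Real.log p ≤ 1/(p*c) - 1 + Real.log c := by rw [h2] at h1; linarith
  have h4 : dd * p * (-Real.log p) ≤ dd * p * (1/(p*c) - 1 + Real.log c) :=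
    mul_le_mul_of_nonneg_left h3 (by positivity)
  have h5 : dd * p * (1/(p*c) - 1 + Real.log c) = dd / c - dd * p + dd * p * Real.log c := by
    field_simp
  linarith

private lemma main_bound {α β : Type} [Fintype α] [Fintype β]
    (Q1 Q2 : α → β → ℝ) (P : β → α → ℝ) (Δ : ℝ)
    (hQ10 : ∀ x y, 0 ≤ Q1 x y) (hQ20 : ∀ x y, 0 ≤ Q2 x y)
    (hQ1s : ∀ y, ∑ x, Q1 x y = 1) (hQ2s : ∀ y, ∑ x, Q2 x y = 1)
    (hP0 : ∀ y x, 0 ≤ P y x) (hP1 : ∀ y x, P y x ≤ 1)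
    (hΔpos : 0 < Δ) (hΔhalf : Δ ≤ 1/2)
    (hΔ : ∑ x, ∑ y, |Q1 x y - Q2 x y| ≤ Δ)
    (hK2 : 2 ≤ (Fintype.card β : ℝ)) :
    |((∑ x, ∑ y, Q1 x y * P y x * Real.log (P y x))
        - ∑ y, (∑ x, Q1 x y * P y x) * Real.log (∑ x, Q1 x y * P y x))
      - ((∑ x, ∑ y, Q2 x y * P y x * Real.log (P y x))
        - ∑ y, (∑ x, Q2 x y * P y x) * Real.log (∑ x, Q2 x y * P y x))|
      ≤ Δ * Real.log ((Fintype.card β : ℝ)^2 / Δ) := by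
  classical
  set K : ℝ := (Fintype.card β : ℝ) with hK
  have hKpos : (0:ℝ) < K := by linarith
  set A1 := ∑ x, ∑ y, Q1 x y * P y x * Real.log (P y x) with hA1
  set A2 := ∑ x, ∑ y, Q2 x y * P y x * Real.log (P y x) with hA2
  set B1 := ∑ y, (∑ x, Q1 x y * P y x) * Real.log (∑ x, Q1 x y * P y x) with hB1
  set B2 := ∑ y, (∑ x, Q2 x y * P y x) * Real.log (∑ x, Q2 x y * P y x) with hB2
  have htri : |(A1 - B1) - (A2 - B2)| ≤ |A1 - A2| + |B1 - B2| := by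
    have h : (A1 - B1) - (A2 - B2) = (A1 - A2) - (B1 - B2) := by ring
    rw [h]; exact abs_sub _ _
  -- the L¹-type quantities
  set σ : ℝ := ∑ x, ∑ y, |Q1 x y - Q2 x y| * P y x with hσ
  have hσ0 : 0 ≤ σ := Finset.sum_nonneg fun x _ => Finset.sum_nonneg fun y _ =>
    mul_nonneg (abs_nonneg _) (hP0 y x)
  have hσleΔ : σ ≤ Δ := by
    refine le_trans ?_ hΔ
    apply Finset.sum_le_sum; intro x _; apply Finset.sum_le_sum; intro y _
    calc |Q1 x y - Q2 x y| * P y x ≤ |Q1 x y - Q2 x y| * 1 :=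
        mul_le_mul_of_nonneg_left (hP1 y x) (abs_nonneg _)
      _ = |Q1 x y - Q2 x y| := mul_one _
  -- pointwise facts about the output distributions
  have hr10 : ∀ y : β, 0 ≤ ∑ x, Q1 x y * P y x := fun y =>
    Finset.sum_nonneg fun x _ => mul_nonneg (hQ10 x y) (hP0 y x)
  have hr20 : ∀ y : β, 0 ≤ ∑ x, Q2 x y * P y x := fun y =>
    Finset.sum_nonneg fun x _ => mul_nonneg (hQ20 x y) (hP0 y x)
  have hr11 : ∀ y : β, (∑ x, Q1 x y * P y x) ≤ 1 := fun y => by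
    calc ∑ x, Q1 x y * P y x ≤ ∑ x, Q1 x y := Finset.sum_le_sum fun x _ => by
          calc Q1 x y * P y x ≤ Q1 x y * 1 :=
              mul_le_mul_of_nonneg_left (hP1 y x) (hQ10 x y)
            _ = Q1 x y := mul_one _
      _ = 1 := hQ1s y
  have hr21 : ∀ y : β, (∑ x, Q2 x y * P y x) ≤ 1 := fun y => by
    calc ∑ x, Q2 x y * P y x ≤ ∑ x, Q2 x y := Finset.sum_le_sum fun x _ => by
          calc Q2 x y * P y x ≤ Q2 x y * 1 :=
              mul_le_mul_of_nonneg_left (hP1 y x) (hQ20 x y)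
            _ = Q2 x y := mul_one _
      _ = 1 := hQ2s y
  have heσ_pt : ∀ y : β, |(∑ x, Q1 x y * P y x) - ∑ x, Q2 x y * P y x|
      ≤ ∑ x, |Q1 x y - Q2 x y| * P y x := fun y => by
    calc |(∑ x, Q1 x y * P y x) - ∑ x, Q2 x y * P y x|
        = |∑ x, (Q1 x y * P y x - Q2 x y * P y x)| := by rw [Finset.sum_sub_distrib]
      _ ≤ ∑ x, |Q1 x y * P y x - Q2 x y * P y x| := Finset.abs_sum_le_sum_abs _ _
      _ = ∑ x, |Q1 x y - Q2 x y| * P y x := Finset.sum_congr rfl fun x _ => by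
          rw [← sub_mul, abs_mul, abs_of_nonneg (hP0 y x)]
  set θ : ℝ := ∑ y, |(∑ x, Q1 x y * P y x) - ∑ x, Q2 x y * P y x| with hθ
  have hθ0 : 0 ≤ θ := Finset.sum_nonneg fun y _ => abs_nonneg _
  have hθσ : θ ≤ σ := by
    rw [hθ, hσ]
    calc ∑ y, |(∑ x, Q1 x y * P y x) - ∑ x, Q2 x y * P y x|
        ≤ ∑ y : β, ∑ x : α, |Q1 x y - Q2 x y| * P y x :=
          Finset.sum_le_sum fun y _ => heσ_pt y
      _ = ∑ x : α, ∑ y : β, |Q1 x y - Q2 x y| * P y x := Finset.sum_comm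
  have he_half : ∀ y : β, |(∑ x, Q1 x y * P y x) - ∑ x, Q2 x y * P y x| ≤ 1/2 := by
    intro y
    have h1 : |(∑ x, Q1 x y * P y x) - ∑ x, Q2 x y * P y x| ≤ θ := by
      rw [hθ]
      exact Finset.single_le_sum
        (f := fun y' : β => |(∑ x, Q1 x y' * P y' x) - ∑ x, Q2 x y' * P y' x|)
        (fun i _ => abs_nonneg _) (Finset.mem_univ y)
    linarith
  -- bound on |B1 - B2| via the pointwise entropy lemma
  have habsB : |B1 - B2| ≤ ∑ y, |(∑ x, Q1 x y * P y x) - ∑ x, Q2 x y * P y x|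
      * (-Real.log (|(∑ x, Q1 x y * P y x) - ∑ x, Q2 x y * P y x|)) := by
    rw [hB1, hB2, ← Finset.sum_sub_distrib]
    refine (Finset.abs_sum_le_sum_abs _ _).trans (Finset.sum_le_sum fun y _ => ?_)
    have h := ent_pointwise (hr10 y) (hr20 y) (hr11 y) (hr21 y) (he_half y)
    calc |(∑ x, Q1 x y * P y x) * Real.log (∑ x, Q1 x y * P y x)
          - (∑ x, Q2 x y * P y x) * Real.log (∑ x, Q2 x y * P y x)|
        ≤ -(|(∑ x, Q1 x y * P y x) - ∑ x, Q2 x y * P y x|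
            * Real.log (|(∑ x, Q1 x y * P y x) - ∑ x, Q2 x y * P y x|)) := h
      _ = |(∑ x, Q1 x y * P y x) - ∑ x, Q2 x y * P y x|
            * (-Real.log (|(∑ x, Q1 x y * P y x) - ∑ x, Q2 x y * P y x|)) := by ring
  -- main case split on σ
  rcases eq_or_lt_of_le hσ0 with hσz | hσpos
  · -- σ = 0 : the two quantities coincide
    have hz : ∀ x y, |Q1 x y - Q2 x y| * P y x = 0 := by
      intro x y
      have houter := (Finset.sum_eq_zero_iff_of_nonneg
        (fun x _ => Finset.sum_nonneg fun y _ =>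
          mul_nonneg (abs_nonneg (Q1 x y - Q2 x y)) (hP0 y x))).1 hσz.symm x (Finset.mem_univ x)
      exact (Finset.sum_eq_zero_iff_of_nonneg
        (fun y _ => mul_nonneg (abs_nonneg _) (hP0 y x))).1 houter y (Finset.mem_univ y)
    have hqp : ∀ x y, Q1 x y * P y x = Q2 x y * P y x := by
      intro x y
      rcases mul_eq_zero.1 (hz x y) with h' | h'
      · have : Q1 x y - Q2 x y = 0 := abs_eq_zero.1 h'
        have hq : Q1 x y = Q2 x y := by linarith
        rw [hq]
      · rw [h', mul_zero, mul_zero]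
    have hAeq : A1 = A2 := by
      rw [hA1, hA2]
      exact Finset.sum_congr rfl fun x _ => Finset.sum_congr rfl fun y _ => by rw [hqp x y]
    have hBeq : B1 = B2 := by
      rw [hB1, hB2]
      refine Finset.sum_congr rfl fun y _ => ?_
      have : (∑ x, Q1 x y * P y x) = ∑ x, Q2 x y * P y x :=
        Finset.sum_congr rfl fun x _ => hqp x y
      rw [this]
    rw [hAeq, hBeq]
    simp only [sub_self, abs_zero]
    have h1 : (1:ℝ) ≤ K^2/Δ := by
      rw [le_div_iff₀ hΔpos]; nlinarith
    exact mul_nonneg (le_of_lt hΔpos) (Real.log_nonneg h1)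
  · -- σ > 0
    have hAbound : |A1 - A2| ≤ σ * Real.log (Δ/σ) := by
      have hA12 : A1 - A2 = ∑ x, ∑ y, (Q1 x y - Q2 x y) * P y x * Real.log (P y x) := by
        rw [hA1, hA2, ← Finset.sum_sub_distrib]
        exact Finset.sum_congr rfl fun x _ => by
          rw [← Finset.sum_sub_distrib]
          exact Finset.sum_congr rfl fun y _ => by ring
      have habs : |A1 - A2| ≤ ∑ x, ∑ y, |Q1 x y - Q2 x y| * P y x * (-Real.log (P y x)) := by
        rw [hA12]
        refine (Finset.abs_sum_le_sum_abs _ _).trans (Finset.sum_le_sum fun x _ => ?_)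
        refine (Finset.abs_sum_le_sum_abs _ _).trans (Finset.sum_le_sum fun y _ => ?_)
        have hlogP : Real.log (P y x) ≤ 0 := Real.log_nonpos (hP0 y x) (hP1 y x)
        rw [abs_mul, abs_mul, abs_of_nonneg (hP0 y x), abs_of_nonpos hlogP]
      set c := Δ / σ with hc
      have hcpos : 0 < c := div_pos hΔpos hσpos
      have hterm : ∀ x y, |Q1 x y - Q2 x y| * P y x * (-Real.log (P y x))
          ≤ |Q1 x y - Q2 x y| / c - |Q1 x y - Q2 x y| * P y x
            + |Q1 x y - Q2 x y| * P y x * Real.log c :=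
        fun x y => term_bound1 (abs_nonneg _) (hP0 y x) hcpos
      have hsumA : ∑ x, ∑ y, (|Q1 x y - Q2 x y| / c - |Q1 x y - Q2 x y| * P y x
            + |Q1 x y - Q2 x y| * P y x * Real.log c)
          = (∑ x, ∑ y, |Q1 x y - Q2 x y|) / c - σ + σ * Real.log c := by
        rw [hσ]
        simp only [Finset.sum_add_distrib, Finset.sum_sub_distrib,
          ← Finset.sum_div, ← Finset.sum_mul]
      have hstep : ∑ x, ∑ y, |Q1 x y - Q2 x y| * P y x * (-Real.log (P y x))
          ≤ σ * Real.log c := by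
        calc ∑ x, ∑ y, |Q1 x y - Q2 x y| * P y x * (-Real.log (P y x))
            ≤ ∑ x, ∑ y, (|Q1 x y - Q2 x y| / c - |Q1 x y - Q2 x y| * P y x
              + |Q1 x y - Q2 x y| * P y x * Real.log c) :=
              Finset.sum_le_sum fun x _ => Finset.sum_le_sum fun y _ => hterm x y
          _ = (∑ x, ∑ y, |Q1 x y - Q2 x y|) / c - σ + σ * Real.log c := hsumA
          _ ≤ Δ / c - σ + σ * Real.log c := by
              have := (div_le_div_iff_of_pos_right hcpos).2 hΔ
              linarith
          _ = σ * Real.log c := by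
              have hΔc : Δ / c = σ := by rw [hc]; field_simp
              linarith
      exact habs.trans hstep
    have hBbound : |B1 - B2| ≤ σ * Real.log (K/σ) := by
      rcases eq_or_lt_of_le hθ0 with hθz | hθpos
      · have hez : ∀ y : β, |(∑ x, Q1 x y * P y x) - ∑ x, Q2 x y * P y x| = 0 :=
          fun y => (Finset.sum_eq_zero_iff_of_nonneg
            (fun y _ => abs_nonneg _)).1 hθz.symm y (Finset.mem_univ y)
        have h0 : |B1 - B2| ≤ 0 := by
          refine habsB.trans (le_of_eq ?_)
          exact Finset.sum_eq_zero fun y _ => by rw [hez y]; ring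
        have h1 : 0 ≤ σ * Real.log (K/σ) := by
          apply mul_nonneg (le_of_lt hσpos)
          apply Real.log_nonneg
          rw [le_div_iff₀ hσpos]
          linarith
        linarith
      · set c2 := K / θ with hc2
        have hc2pos : 0 < c2 := div_pos hKpos hθpos
        have hterm2 : ∀ y : β, |(∑ x, Q1 x y * P y x) - ∑ x, Q2 x y * P y x|
            * (-Real.log (|(∑ x, Q1 x y * P y x) - ∑ x, Q2 x y * P y x|))
            ≤ 1/c2 - |(∑ x, Q1 x y * P y x) - ∑ x, Q2 x y * P y x|
              + |(∑ x, Q1 x y * P y x) - ∑ x, Q2 x y * P y x| * Real.log c2 := by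
          intro y
          have h := term_bound1 (le_of_lt one_pos :
              (0:ℝ) ≤ 1) (abs_nonneg ((∑ x, Q1 x y * P y x) - ∑ x, Q2 x y * P y x)) hc2pos
          simp only [one_mul] at h
          exact h
        have hsum2 : ∑ y : β, (1/c2 - |(∑ x, Q1 x y * P y x) - ∑ x, Q2 x y * P y x|
              + |(∑ x, Q1 x y * P y x) - ∑ x, Q2 x y * P y x| * Real.log c2)
            = K * (1/c2) - θ + θ * Real.log c2 := by
          rw [hθ, hK]
          simp only [Finset.sum_add_distrib, Finset.sum_sub_distrib, Finset.sum_const,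
            Finset.card_univ, nsmul_eq_mul, ← Finset.sum_mul]
        have hKc : K * (1/c2) = θ := by
          rw [hc2]
          field_simp
        have hstep2 : |B1 - B2| ≤ θ * Real.log c2 := by
          refine habsB.trans ?_
          calc ∑ y : β, |(∑ x, Q1 x y * P y x) - ∑ x, Q2 x y * P y x|
              * (-Real.log (|(∑ x, Q1 x y * P y x) - ∑ x, Q2 x y * P y x|))
              ≤ ∑ y : β, (1/c2 - |(∑ x, Q1 x y * P y x) - ∑ x, Q2 x y * P y x|
                + |(∑ x, Q1 x y * P y x) - ∑ x, Q2 x y * P y x| * Real.log c2) :=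
                Finset.sum_le_sum fun y _ => hterm2 y
            _ = K * (1/c2) - θ + θ * Real.log c2 := hsum2
            _ = θ * Real.log c2 := by rw [hKc]; ring
        rw [hc2] at hstep2
        refine hstep2.trans ?_
        exact mono_xlogkx hθ0 hθσ (by linarith) hK2
    calc |(A1 - B1) - (A2 - B2)| ≤ |A1 - A2| + |B1 - B2| := htri
      _ ≤ σ * Real.log (Δ/σ) + σ * Real.log (K/σ) := add_le_add hAbound hBbound
      _ ≤ Δ * Real.log (K^2/Δ) := final_combination hσpos hσleΔ hΔhalf hK2

end AuxDI

/-- Uniform continuity of directed information (Lemma 4 of the paper): if two causal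
conditioning input distributions are within `Δ ≤ 1/2` in `L¹` distance, then for every
channel causal conditioning `P`,
`|I(Q1;P) - I(Q2;P)| ≤ -Δ log (Δ / |Y^n|²)`. -/
theorem di_uniform_continuity {X Y : Type} [Fintype X] [DecidableEq X]
    [Fintype Y] [DecidableEq Y] (n : ℕ)
    (Q1 Q2 : (Fin n → X) → (Fin n → Y) → ℝ)
    (P : (Fin n → Y) → (Fin n → X) → ℝ) (Δ : ℝ)
    (hQ1 : IsCausalIn n Q1) (hQ2 : IsCausalIn n Q2) (hP : IsCausalCh n P)
    (hΔpos : 0 < Δ) (hΔhalf : Δ ≤ 1 / 2)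
    (hΔ : ∑ x, ∑ y, |Q1 x y - Q2 x y| ≤ Δ) :
    |DI n Q1 P - DI n Q2 P| ≤ -Δ * Real.log (Δ / ((Fintype.card Y : ℝ) ^ n) ^ 2) := by
  classical
  have hQ10 : ∀ x y, 0 ≤ Q1 x y := hQ1.1
  have hQ20 : ∀ x y, 0 ≤ Q2 x y := hQ2.1
  have hP0 : ∀ y x, 0 ≤ P y x := hP.1
  have hPsum : ∀ x, ∑ y, P y x = 1 := hP.2.1
  have hcast : ((Fintype.card Y : ℝ) ^ n) ^ 2 = (((Fintype.card Y ^ n) ^ 2 : ℕ) : ℝ) := by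
    push_cast; ring
  have hrhs0 : 0 ≤ -Δ * Real.log (Δ / ((Fintype.card Y : ℝ) ^ n) ^ 2) := by
    rw [hcast]
    rcases Nat.eq_zero_or_pos ((Fintype.card Y ^ n) ^ 2) with h | h
    · simp [h]
    · have h1 : (1:ℝ) ≤ (((Fintype.card Y ^ n) ^ 2 : ℕ) : ℝ) := by exact_mod_cast h
      have hlog : Real.log (Δ / (((Fintype.card Y ^ n) ^ 2 : ℕ) : ℝ)) ≤ 0 :=
        Real.log_nonpos (by positivity) (by rw [div_le_one (by linarith)]; linarith)
      nlinarith
  by_cases hX : IsEmpty (Fin n → X)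
  · have h0 : DI n Q1 P = 0 := by unfold DI; rw [Finset.univ_eq_empty, Finset.sum_empty]
    have h0' : DI n Q2 P = 0 := by unfold DI; rw [Finset.univ_eq_empty, Finset.sum_empty]
    rw [h0, h0']
    simpa using hrhs0
  have hXne : Nonempty (Fin n → X) := not_isEmpty_iff.1 hX
  obtain ⟨x₀⟩ := hXne
  have hYne : Nonempty (Fin n → Y) := by
    by_contra h
    have hYe : IsEmpty (Fin n → Y) := not_nonempty_iff.1 h
    have h1 := hPsum x₀
    rw [Finset.univ_eq_empty, Finset.sum_empty] at h1
    norm_num at h1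
  have hP1 : ∀ y x, P y x ≤ 1 := by
    intro y x
    have h1 := Finset.single_le_sum (f := fun y' => P y' x)
      (fun i _ => hP0 i x) (Finset.mem_univ y)
    rw [hPsum x] at h1
    exact h1
  by_cases hK1 : Fintype.card (Fin n → Y) = 1
  · have hsub : Subsingleton (Fin n → Y) :=
      Fintype.card_le_one_iff_subsingleton.1 (le_of_eq hK1)
    obtain ⟨y₀⟩ := hYne
    have hDI0 : ∀ Q : (Fin n → X) → (Fin n → Y) → ℝ,
        (∀ y, ∑ x, Q x y = 1) → DI n Q P = 0 := by
      intro Q hQsum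
      unfold DI
      apply Finset.sum_eq_zero
      intro x _
      rw [Fintype.sum_subsingleton _ y₀]
      have hPy : P y₀ x = 1 := by
        have h1 := hPsum x
        rwa [Fintype.sum_subsingleton (fun y => P y x) y₀] at h1
      have hr : (∑ x', Q x' y₀ * P y₀ x') = 1 := by
        have hterm : ∀ x', Q x' y₀ * P y₀ x' = Q x' y₀ := by
          intro x'
          have hPy' : P y₀ x' = 1 := by
            have h1 := hPsum x'
            rwa [Fintype.sum_subsingleton (fun y => P y x') y₀] at h1
          rw [hPy']; ring
        rw [Finset.sum_congr rfl fun x' _ => hterm x']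
        exact hQsum y₀
      rw [hPy, hr]
      norm_num
    rw [hDI0 Q1 hQ1.2.1, hDI0 Q2 hQ2.2.1]
    simpa using hrhs0
  -- main case
  have hKN1 : 1 ≤ Fintype.card (Fin n → Y) := Fintype.card_pos
  have hK2 : 2 ≤ Fintype.card (Fin n → Y) := by omega
  have hK2' : (2:ℝ) ≤ (Fintype.card (Fin n → Y) : ℝ) := by exact_mod_cast hK2
  have hKeq : (Fintype.card Y : ℝ) ^ n = (Fintype.card (Fin n → Y) : ℝ) := by
    rw [Fintype.card_fun, Fintype.card_fin]
    push_cast; ring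
  have hRHSeq : -Δ * Real.log (Δ / ((Fintype.card Y : ℝ) ^ n) ^ 2)
      = Δ * Real.log ((Fintype.card (Fin n → Y) : ℝ) ^ 2 / Δ) := by
    rw [hKeq]
    have h1 : Real.log ((Fintype.card (Fin n → Y) : ℝ) ^ 2 / Δ)
        = -Real.log (Δ / (Fintype.card (Fin n → Y) : ℝ) ^ 2) := by
      rw [← Real.log_inv, inv_div]
    rw [h1]; ring
  rw [hRHSeq, DI_decomp n Q1 P hQ10 hP0, DI_decomp n Q2 P hQ20 hP0]
  exact main_bound Q1 Q2 P Δ hQ10 hQ20 hQ1.2.1 hQ2.2.1 hP0 hP1 hΔpos hΔhalf hΔ hK2'
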